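/- (Cauchy's identity) For $|q| < 1$ and $|z|$ small enough (e.g. $|zq| < 1$): $\frac{1}{(zq;q)_{\infty}} = \sum_{j=0}^{\infty} \frac{z^j q^{j^2}}{(zq;q)_j (q)_j}$. -/

import Mathlib

open Finset Filter Complex Topology

/-- `(q)ₙ = ∏_{k=1}^n (1 - q^k)` -/
noncomputable def qPoch (q : ℂ) (n : ℕ) : ℂ := ∏ k ∈ Finset.range n, (1 - q ^ (k + 1))

noncomputable def qb (q : ℂ) (N j : ℕ) : ℂ :=
  if j ≤ N then qPoch q N / (qPoch q j * qPoch q (N - j)) else 0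

lemma one_sub_ne_zero_of_norm_lt_one {w : ℂ} (h : ‖w‖ < 1) : (1 : ℂ) - w ≠ 0 := by
  intro h0
  have hw : w = 1 := by linear_combination -h0
  rw [hw] at h; simp at h

lemma factor_ne_zero {q : ℂ} (hq : ‖q‖ < 1) (k : ℕ) : (1 : ℂ) - q ^ (k + 1) ≠ 0 := by
  apply one_sub_ne_zero_of_norm_lt_one
  rw [norm_pow]
  exact pow_lt_one₀ (norm_nonneg q) hq (Nat.succ_ne_zero k)

lemma qPoch_ne_zero {q : ℂ} (hq : ‖q‖ < 1) (n : ℕ) : qPoch q n ≠ 0 :=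
  Finset.prod_ne_zero_iff.2 fun k _ => factor_ne_zero hq k

lemma qPoch_succ (q : ℂ) (n : ℕ) : qPoch q (n + 1) = qPoch q n * (1 - q ^ (n + 1)) :=
  Finset.prod_range_succ _ _

lemma qb_pascal {q : ℂ} (hq : ‖q‖ < 1) (N j : ℕ) (hj : j ≤ N) :
    qb q (N + 1) (j + 1) = qb q N (j + 1) + q ^ (N - j) * qb q N j := by
  rcases eq_or_lt_of_le hj with rfl | hjN
  · simp only [qb, le_refl, if_pos, Nat.sub_self, Nat.lt_irrefl]
    have h0 : qPoch q 0 = 1 := by simp [qPoch]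
    rw [h0, mul_one, mul_one, div_self (qPoch_ne_zero hq (j+1)),
      div_self (qPoch_ne_zero hq j)]
    simp
  · have h1 : j + 1 ≤ N := hjN
    simp only [qb, if_pos (by omega : j + 1 ≤ N + 1), if_pos h1, if_pos hj]
    have e1 : N + 1 - (j + 1) = N - j := by omega
    have e2 : N - j = (N - (j + 1)) + 1 := by omega
    rw [e1, qPoch_succ q N, e2, qPoch_succ q (N - (j+1)), qPoch_succ q j]
    have hpow : q ^ (N + 1) = q ^ ((N - (j+1)) + 1) * q ^ (j + 1) := by
      rw [← pow_add]; congr 1; omega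
    rw [hpow]
    have hA := qPoch_ne_zero hq N
    have hB := qPoch_ne_zero hq j
    have hC := qPoch_ne_zero hq (N - (j+1))
    have hf1 := factor_ne_zero hq j
    have hf2 := factor_ne_zero hq (N - (j+1))
    generalize qPoch q N = A at *
    generalize qPoch q j = B at *
    generalize qPoch q (N - (j+1)) = C at *
    generalize q ^ (j + 1) = u at *
    generalize q ^ ((N - (j+1)) + 1) = v at *
    field_simp
    ring

lemma qb_zero {q : ℂ} (hq : ‖q‖ < 1) (N : ℕ) : qb q N 0 = 1 := by
  have h0 : qPoch q 0 = 1 := by simp [qPoch]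
  simp only [qb, if_pos (Nat.zero_le N), Nat.sub_zero, h0, one_mul]
  exact div_self (qPoch_ne_zero hq N)

lemma qb_top_succ (q : ℂ) (N : ℕ) : qb q N (N + 1) = 0 := by
  simp [qb]

lemma key_identity {q : ℂ} (hq : ‖q‖ < 1) :
    ∀ (N : ℕ) (z : ℂ),
      ∑ j ∈ Finset.range (N + 1), z ^ j * q ^ (j ^ 2) * qb q N j *
        ∏ m ∈ Finset.Ico j N, (1 - z * q ^ (m + 1)) = 1 := by
  intro N
  induction N with
  | zero =>
    intro z
    simp [qb_zero hq]
  | succ N ih =>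
    intro z
    have hsplit : ∀ i ∈ Finset.range (N + 1),
        z ^ (i+1) * q ^ ((i+1) ^ 2) * qb q (N+1) (i+1) *
          ∏ m ∈ Finset.Ico (i+1) (N+1), (1 - z * q ^ (m + 1))
        = (z ^ (i+1) * q ^ ((i+1) ^ 2) * qb q N (i+1) *
            ∏ m ∈ Finset.Ico (i+1) (N+1), (1 - z * q ^ (m + 1)))
          + z * q ^ (N+1) * ((z*q) ^ i * q ^ (i ^ 2) * qb q N i *
            ∏ m ∈ Finset.Ico i N, (1 - (z*q) * q ^ (m + 1))) := by
      intro i hi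
      have hiN : i ≤ N := by simpa [Nat.lt_succ_iff] using hi
      rw [qb_pascal hq N i hiN]
      have hprod : ∏ m ∈ Finset.Ico (i+1) (N+1), (1 - z * q ^ (m + 1))
          = ∏ m ∈ Finset.Ico i N, (1 - (z*q) * q ^ (m + 1)) := by
        rw [Finset.prod_Ico_eq_prod_range, Finset.prod_Ico_eq_prod_range]
        have hN : N + 1 - (i + 1) = N - i := by omega
        rw [hN]
        refine Finset.prod_congr rfl fun k _ => ?_
        have h1 : i + 1 + k + 1 = (i + k + 1) + 1 := by omega
        rw [h1, pow_succ]
        ring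
      rw [hprod]
      have hc : z ^ (i+1) * q ^ ((i+1) ^ 2) * q ^ (N - i)
          = z * q ^ (N+1) * ((z*q) ^ i * q ^ (i ^ 2)) := by
        rw [mul_pow]
        have he : (i+1) ^ 2 + (N - i) = (N+1) + i + i ^ 2 := by
          have h2 : (i+1) ^ 2 = i ^ 2 + 2*i + 1 := by ring
          omega
        calc z ^ (i+1) * q ^ ((i+1) ^ 2) * q ^ (N - i)
            = z ^ (i+1) * q ^ ((i+1) ^ 2 + (N - i)) := by rw [pow_add]; ring
          _ = z ^ (i+1) * q ^ ((N+1) + i + i ^ 2) := by rw [he]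
          _ = z * q ^ (N+1) * (z ^ i * q ^ i * q ^ (i ^ 2)) := by
              rw [pow_add, pow_add, pow_succ]; ring
      linear_combination (qb q N i * ∏ m ∈ Finset.Ico i N, (1 - (z*q) * q ^ (m + 1))) * hc
    rw [Finset.sum_range_succ', Finset.sum_congr rfl hsplit, Finset.sum_add_distrib]
    have hB : ∑ i ∈ Finset.range (N+1), z * q ^ (N+1) * ((z*q) ^ i * q ^ (i ^ 2) * qb q N i *
        ∏ m ∈ Finset.Ico i N, (1 - (z*q) * q ^ (m + 1))) = z * q ^ (N+1) := by
      rw [← Finset.mul_sum, ih (z*q), mul_one]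
    rw [hB]
    have hA : (∑ i ∈ Finset.range (N+1), z ^ (i+1) * q ^ ((i+1) ^ 2) * qb q N (i+1) *
          ∏ m ∈ Finset.Ico (i+1) (N+1), (1 - z * q ^ (m + 1)))
        + z ^ 0 * q ^ ((0:ℕ) ^ 2) * qb q (N+1) 0 *
          ∏ m ∈ Finset.Ico 0 (N+1), (1 - z * q ^ (m + 1))
        = 1 - z * q ^ (N+1) := by
      rw [Finset.sum_range_succ, qb_top_succ, qb_zero hq]
      simp only [mul_zero, zero_mul, add_zero]
      rw [show z ^ 0 * q ^ ((0:ℕ) ^ 2) * (1:ℂ) *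
            ∏ m ∈ Finset.Ico 0 (N+1), (1 - z * q ^ (m + 1))
          = z ^ 0 * q ^ ((0:ℕ) ^ 2) * qb q N 0 *
            ∏ m ∈ Finset.Ico 0 (N+1), (1 - z * q ^ (m + 1)) from by rw [qb_zero hq]]
      rw [← Finset.sum_range_succ' (fun j => z ^ j * q ^ (j ^ 2) * qb q N j *
        ∏ m ∈ Finset.Ico j (N+1), (1 - z * q ^ (m + 1))) N]
      have hstep : ∀ j ∈ Finset.range (N+1),
          z ^ j * q ^ (j ^ 2) * qb q N j *
            ∏ m ∈ Finset.Ico j (N+1), (1 - z * q ^ (m + 1))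
          = (z ^ j * q ^ (j ^ 2) * qb q N j *
            ∏ m ∈ Finset.Ico j N, (1 - z * q ^ (m + 1))) * (1 - z * q ^ (N+1)) := by
        intro j hj
        rw [Finset.prod_Ico_succ_top (by simp at hj; omega : j ≤ N)]
        ring
      rw [Finset.sum_congr rfl hstep, ← Finset.sum_mul, ih z, one_mul]
    linear_combination hA

lemma exp_neg_le_one_sub {x r : ℝ} (h0 : 0 ≤ x) (hxr : x ≤ r) (hr : r < 1) :
    Real.exp (-(x / (1 - r))) ≤ 1 - x := by
  have h1r : 0 < 1 - r := by linarith
  have ht : 0 ≤ x / (1 - r) := div_nonneg h0 h1r.le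
  have hexp : x / (1 - r) + 1 ≤ Real.exp (x / (1 - r)) := Real.add_one_le_exp _
  rw [Real.exp_neg, inv_eq_one_div, div_le_iff₀ (Real.exp_pos _)]
  have hx : x / (1 - r) * (1 - r) = x := div_mul_cancel₀ x (ne_of_gt h1r)
  nlinarith [mul_nonneg ht (sub_nonneg.2 hxr),
    mul_le_mul_of_nonneg_left hexp (show (0:ℝ) ≤ 1 - x by linarith)]

lemma prod_one_sub_lower {x : ℕ → ℝ} {r B : ℝ} (hr : r < 1)
    (h0 : ∀ k, 0 ≤ x k) (h1 : ∀ k, x k ≤ r)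
    (hB : ∀ n, ∑ k ∈ Finset.range n, x k ≤ B) (n : ℕ) :
    Real.exp (-(B / (1 - r))) ≤ ∏ k ∈ Finset.range n, (1 - x k) := by
  have h1r : 0 < 1 - r := by linarith
  calc Real.exp (-(B / (1 - r)))
      ≤ Real.exp (-((∑ k ∈ Finset.range n, x k) / (1 - r))) := by
        apply Real.exp_le_exp.2
        apply neg_le_neg
        gcongr
        exact hB n
    _ = ∏ k ∈ Finset.range n, Real.exp (-(x k / (1 - r))) := by
        rw [← Real.exp_sum]
        congr 1
        simp [Finset.sum_div, neg_div]
    _ ≤ ∏ k ∈ Finset.range n, (1 - x k) :=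
        Finset.prod_le_prod (fun k _ => (Real.exp_pos _).le)
          (fun k _ => exp_neg_le_one_sub (h0 k) (h1 k) hr)

lemma prod_one_add_upper {x : ℕ → ℝ} {B : ℝ} (h0 : ∀ k, 0 ≤ x k)
    (hB : ∀ n, ∑ k ∈ Finset.range n, x k ≤ B) (n : ℕ) :
    ∏ k ∈ Finset.range n, (1 + x k) ≤ Real.exp B := by
  calc ∏ k ∈ Finset.range n, (1 + x k)
      ≤ ∏ k ∈ Finset.range n, Real.exp (x k) :=
        Finset.prod_le_prod (fun k _ => by have := h0 k; positivity)
          (fun k _ => by rw [add_comm]; exact Real.add_one_le_exp _)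
    _ = Real.exp (∑ k ∈ Finset.range n, x k) := (Real.exp_sum _ _).symm
    _ ≤ Real.exp B := Real.exp_le_exp.2 (hB n)

lemma geom_bound {a s : ℝ} (ha : 0 ≤ a) (hs0 : 0 ≤ s) (hs : s < 1) (n : ℕ) :
    ∑ k ∈ Finset.range n, a * s ^ k ≤ a / (1 - s) := by
  rw [← Finset.mul_sum, div_eq_mul_inv]
  gcongr
  calc ∑ k ∈ Finset.range n, s ^ k ≤ ∑' k : ℕ, s ^ k :=
        (summable_geometric_of_lt_one hs0 hs).sum_le_tsum _ (fun k _ => by positivity)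
    _ = (1 - s)⁻¹ := tsum_geometric_of_lt_one hs0 hs

lemma norm_cqm_lt_one {q c : ℂ} (hq : ‖q‖ < 1) (hc : ‖c‖ < 1) (m : ℕ) : ‖c * q ^ m‖ < 1 := by
  rw [norm_mul, norm_pow]
  calc ‖c‖ * ‖q‖ ^ m ≤ ‖c‖ * 1 := by
        gcongr
        exact pow_le_one₀ (norm_nonneg q) hq.le
    _ < 1 := by rw [mul_one]; exact hc

lemma norm_prod_lower {q c : ℂ} (hq : ‖q‖ < 1) (hc : ‖c‖ < 1) (n : ℕ) :
    Real.exp (-((‖c‖ / (1 - ‖q‖)) / (1 - ‖c‖))) ≤ ‖∏ m ∈ Finset.range n, (1 - c * q ^ m)‖ := by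
  have hx0 : ∀ k : ℕ, 0 ≤ ‖c‖ * ‖q‖ ^ k := fun k => by positivity
  have hx1 : ∀ k : ℕ, ‖c‖ * ‖q‖ ^ k ≤ ‖c‖ := fun k => by
    calc ‖c‖ * ‖q‖ ^ k ≤ ‖c‖ * 1 := by
          gcongr; exact pow_le_one₀ (norm_nonneg q) hq.le
      _ = ‖c‖ := mul_one _
  have hB := geom_bound (norm_nonneg c) (norm_nonneg q) hq
  calc Real.exp (-((‖c‖ / (1 - ‖q‖)) / (1 - ‖c‖)))
      ≤ ∏ k ∈ Finset.range n, (1 - ‖c‖ * ‖q‖ ^ k) :=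
        prod_one_sub_lower hc hx0 hx1 hB n
    _ ≤ ‖∏ m ∈ Finset.range n, (1 - c * q ^ m)‖ := by
        rw [norm_prod]
        refine Finset.prod_le_prod (fun k _ => ?_) (fun k _ => ?_)
        · have := hx1 k; linarith
        · calc 1 - ‖c‖ * ‖q‖ ^ k
              = ‖(1:ℂ)‖ - ‖c * q ^ k‖ := by rw [norm_one, norm_mul, norm_pow]
            _ ≤ ‖1 - c * q ^ k‖ := norm_sub_norm_le _ _

lemma norm_prod_upper {q c : ℂ} (hq : ‖q‖ < 1) (hc : 0 ≤ ‖c‖) (n : ℕ) :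
    ‖∏ m ∈ Finset.range n, (1 - c * q ^ m)‖ ≤ Real.exp (‖c‖ / (1 - ‖q‖)) := by
  have hB := geom_bound (norm_nonneg c) (norm_nonneg q) hq
  calc ‖∏ m ∈ Finset.range n, (1 - c * q ^ m)‖
      ≤ ∏ k ∈ Finset.range n, (1 + ‖c‖ * ‖q‖ ^ k) := by
        rw [norm_prod]
        refine Finset.prod_le_prod (fun k _ => norm_nonneg _) (fun k _ => ?_)
        calc ‖1 - c * q ^ k‖ ≤ ‖(1:ℂ)‖ + ‖c * q ^ k‖ := norm_sub_le _ _
          _ = 1 + ‖c‖ * ‖q‖ ^ k := by rw [norm_one, norm_mul, norm_pow]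
    _ ≤ Real.exp (‖c‖ / (1 - ‖q‖)) :=
        prod_one_add_upper (fun k => by positivity) hB n

lemma summable_log_one_sub {q c : ℂ} (hq : ‖q‖ < 1) (hc : ‖c‖ < 1) :
    Summable (fun k : ℕ => Complex.log (1 - c * q ^ k)) := by
  apply Summable.of_norm_bounded (g := fun k => ((1 - ‖c‖)⁻¹ / 2 + 1) * (‖c‖ * ‖q‖ ^ k))
  · exact ((summable_geometric_of_lt_one (norm_nonneg q) hq).mul_left _).mul_left _
  · intro k
    have hu : ‖-(c * q ^ k)‖ < 1 := by rw [norm_neg]; exact norm_cqm_lt_one hq hc k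
    have h1 : (1:ℂ) - c * q ^ k = 1 + -(c * q ^ k) := by ring
    rw [h1]
    have hu0 : 0 ≤ ‖-(c * q ^ k)‖ := norm_nonneg _
    have hu1 : ‖-(c * q ^ k)‖ ≤ ‖c‖ := by
      rw [norm_neg, norm_mul, norm_pow]
      calc ‖c‖ * ‖q‖ ^ k ≤ ‖c‖ * 1 := by
            gcongr; exact pow_le_one₀ (norm_nonneg q) hq.le
        _ = ‖c‖ := mul_one _
    have hinv : (1 - ‖-(c * q ^ k)‖)⁻¹ ≤ (1 - ‖c‖)⁻¹ := by
      apply inv_anti₀ (by linarith) (by linarith)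
    calc ‖Complex.log (1 + -(c * q ^ k))‖
        ≤ ‖-(c * q ^ k)‖ ^ 2 * (1 - ‖-(c * q ^ k)‖)⁻¹ / 2 + ‖-(c * q ^ k)‖ :=
          Complex.norm_log_one_add_le hu
      _ ≤ ‖-(c * q ^ k)‖ * (1 - ‖c‖)⁻¹ / 2 + ‖-(c * q ^ k)‖ := by
          have hsq : ‖-(c * q ^ k)‖ ^ 2 ≤ ‖-(c * q ^ k)‖ := by
            calc ‖-(c * q ^ k)‖ ^ 2 = ‖-(c * q ^ k)‖ * ‖-(c * q ^ k)‖ := sq _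
              _ ≤ ‖-(c * q ^ k)‖ * 1 := mul_le_mul_of_nonneg_left hu.le hu0
              _ = _ := mul_one _
          have hmm : ‖-(c * q ^ k)‖ ^ 2 * (1 - ‖-(c * q ^ k)‖)⁻¹
              ≤ ‖-(c * q ^ k)‖ * (1 - ‖c‖)⁻¹ :=
            mul_le_mul hsq hinv (inv_nonneg.2 (by linarith)) hu0
          linarith
      _ ≤ ((1 - ‖c‖)⁻¹ / 2 + 1) * (‖c‖ * ‖q‖ ^ k) := by
          rw [norm_neg, norm_mul, norm_pow]
          apply le_of_eq
          ring

lemma qPoch_eq (q : ℂ) (n : ℕ) : qPoch q n = ∏ k ∈ Finset.range n, (1 - q * q ^ k) :=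
  Finset.prod_congr rfl fun k _ => by rw [pow_succ']

lemma zprod_eq (z q : ℂ) (n : ℕ) :
    ∏ m ∈ Finset.range n, (1 - z * q ^ (m + 1)) =
      ∏ m ∈ Finset.range n, (1 - (z * q) * q ^ m) :=
  Finset.prod_congr rfl fun m _ => by rw [pow_succ']; ring_nf

lemma fin_identity {z q : ℂ} (hq : ‖q‖ < 1) (hzq : ‖z * q‖ < 1) (N : ℕ) :
    (∏ m ∈ Finset.range N, (1 - z * q ^ (m + 1)))⁻¹
      = ∑ j ∈ Finset.range (N + 1), z ^ j * q ^ (j ^ 2) * qb q N j /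
          ∏ m ∈ Finset.range j, (1 - z * q ^ (m + 1)) := by
  have hzfac : ∀ m : ℕ, (1 : ℂ) - z * q ^ (m + 1) ≠ 0 := fun m => by
    apply one_sub_ne_zero_of_norm_lt_one
    have h : z * q ^ (m + 1) = (z * q) * q ^ m := by rw [pow_succ']; ring
    rw [h]
    exact norm_cqm_lt_one hq hzq m
  have hzprod_ne : ∀ n, (∏ m ∈ Finset.range n, (1 - z * q ^ (m + 1))) ≠ 0 :=
    fun n => Finset.prod_ne_zero_iff.2 fun m _ => hzfac m
  have hk := key_identity hq N z
  calc (∏ m ∈ Finset.range N, (1 - z * q ^ (m + 1)))⁻¹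
      = (∏ m ∈ Finset.range N, (1 - z * q ^ (m + 1)))⁻¹ *
        ∑ j ∈ Finset.range (N + 1), z ^ j * q ^ (j ^ 2) * qb q N j *
          ∏ m ∈ Finset.Ico j N, (1 - z * q ^ (m + 1)) := by rw [hk, mul_one]
    _ = ∑ j ∈ Finset.range (N + 1), z ^ j * q ^ (j ^ 2) * qb q N j /
          ∏ m ∈ Finset.range j, (1 - z * q ^ (m + 1)) := by
        rw [Finset.mul_sum]
        refine Finset.sum_congr rfl fun j hj => ?_
        have hjN : j ≤ N := by simp at hj; omega
        have hsplitP : (∏ m ∈ Finset.range j, (1 - z * q ^ (m + 1))) *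
            ∏ m ∈ Finset.Ico j N, (1 - z * q ^ (m + 1))
            = ∏ m ∈ Finset.range N, (1 - z * q ^ (m + 1)) :=
          Finset.prod_range_mul_prod_Ico _ hjN
        rw [← hsplitP]
        have h1 := hzprod_ne j
        have h2 : (∏ m ∈ Finset.Ico j N, (1 - z * q ^ (m + 1))) ≠ 0 :=
          Finset.prod_ne_zero_iff.2 fun m _ => hzfac m
        field_simp

/-- Cauchy's identity: `1/(zq;q)_∞ = ∑_{j≥0} z^j q^{j²} / ((zq;q)_j (q)_j)`. -/
theorem cauchy_identity (z q : ℂ) (hq : ‖q‖ < 1) (hzq : ‖z * q‖ < 1) :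
    (∏' m : ℕ, (1 - z * q ^ (m + 1)))⁻¹ =
      ∑' j : ℕ, z ^ j * q ^ (j ^ 2) /
        ((∏ m ∈ Finset.range j, (1 - z * q ^ (m + 1))) * qPoch q j) := by
  set cq : ℝ := Real.exp (-((‖q‖ / (1 - ‖q‖)) / (1 - ‖q‖))) with hcq_def
  set czq : ℝ := Real.exp (-((‖z*q‖ / (1 - ‖q‖)) / (1 - ‖z*q‖))) with hczq_def
  set Mq : ℝ := Real.exp (‖q‖ / (1 - ‖q‖)) with hMq_def
  set Mzq : ℝ := Real.exp (‖z*q‖ / (1 - ‖q‖)) with hMzq_def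
  have hcq_pos : 0 < cq := Real.exp_pos _
  have hczq_pos : 0 < czq := Real.exp_pos _
  have hMzq_pos : 0 < Mzq := Real.exp_pos _
  have hq_low : ∀ n, cq ≤ ‖qPoch q n‖ := fun n => by
    rw [qPoch_eq]; exact norm_prod_lower hq hq n
  have hq_up : ∀ n, ‖qPoch q n‖ ≤ Mq := fun n => by
    rw [qPoch_eq]; exact norm_prod_upper hq (norm_nonneg q) n
  have hz_low : ∀ n, czq ≤ ‖∏ m ∈ Finset.range n, (1 - z * q ^ (m+1))‖ := fun n => by
    rw [zprod_eq]; exact norm_prod_lower hq hzq n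
  have hz_up : ∀ n, ‖∏ m ∈ Finset.range n, (1 - z * q ^ (m+1))‖ ≤ Mzq := fun n => by
    rw [zprod_eq]; exact norm_prod_upper hq (norm_nonneg _) n
  have hzprod_ne : ∀ n, (∏ m ∈ Finset.range n, (1 - z * q ^ (m+1))) ≠ 0 := fun n h0 => by
    have := hz_low n; rw [h0, norm_zero] at this; linarith
  -- multipliability for (q)_n and its limit
  have hmulq : Multipliable (fun k : ℕ => 1 - q * q ^ k) :=
    Complex.multipliable_of_summable_log (summable_log_one_sub hq hq)
  set Pq : ℂ := ∏' k : ℕ, (1 - q * q ^ k) with hPq_def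
  have htq : Filter.Tendsto (fun n => qPoch q n) Filter.atTop (𝓝 Pq) := by
    have h := hmulq.hasProd.tendsto_prod_nat
    exact h.congr fun n => (qPoch_eq q n).symm
  have hPq_norm : cq ≤ ‖Pq‖ :=
    ge_of_tendsto htq.norm (Filter.Eventually.of_forall hq_low)
  have hPq_ne : Pq ≠ 0 := fun h0 => by rw [h0, norm_zero] at hPq_norm; linarith
  have hratio : ∀ j : ℕ, Filter.Tendsto (fun N => qPoch q N / qPoch q (N - j))
      Filter.atTop (𝓝 1) := by
    intro j
    have h2 : Filter.Tendsto (fun N : ℕ => qPoch q (N - j)) Filter.atTop (𝓝 Pq) :=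
      htq.comp (Filter.tendsto_sub_atTop_nat j)
    have h3 := htq.div h2 hPq_ne
    rwa [div_self hPq_ne] at h3
  -- summands
  set F : ℕ → ℕ → ℂ := fun N j => if j ≤ N then
    z ^ j * q ^ (j ^ 2) * qb q N j / ∏ m ∈ Finset.range j, (1 - z * q ^ (m + 1)) else 0
    with hF_def
  set G : ℕ → ℂ := fun j => z ^ j * q ^ (j ^ 2) /
    ((∏ m ∈ Finset.range j, (1 - z * q ^ (m + 1))) * qPoch q j) with hG_def
  have htsumF : ∀ N, ∑' j, F N j = (∏ m ∈ Finset.range N, (1 - z * q ^ (m+1)))⁻¹ := by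
    intro N
    rw [tsum_eq_sum (s := Finset.range (N+1)) (f := F N) (fun j hj => by
      simp only [Finset.mem_range, not_lt] at hj
      simp only [hF_def]
      rw [if_neg (by omega)])]
    rw [fin_identity hq hzq N]
    refine Finset.sum_congr rfl fun j hj => ?_
    simp only [hF_def]
    rw [if_pos (by simp at hj; omega)]
  have hlimF : ∀ j, Filter.Tendsto (fun N => F N j) Filter.atTop (𝓝 (G j)) := by
    intro j
    have hev : (fun N => G j * (qPoch q N / qPoch q (N - j))) =ᶠ[Filter.atTop]
        (fun N => F N j) := by
      filter_upwards [Filter.eventually_ge_atTop j] with N hN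
      simp only [hF_def, hG_def, qb]
      rw [if_pos hN, if_pos hN]
      have h1 := qPoch_ne_zero hq j
      have h2 := qPoch_ne_zero hq (N - j)
      have h3 := qPoch_ne_zero hq N
      have h4 := hzprod_ne j
      field_simp
    have h5 : Filter.Tendsto (fun N => G j * (qPoch q N / qPoch q (N - j)))
        Filter.atTop (𝓝 (G j * 1)) := tendsto_const_nhds.mul (hratio j)
    rw [mul_one] at h5
    exact h5.congr' hev
  have hFbound : ∀ N j, ‖F N j‖ ≤ (Mq / (cq * cq * czq)) * ‖z*q‖ ^ j := by
    intro N j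
    by_cases hj : j ≤ N
    · have e : ‖F N j‖ = (‖z‖ ^ j * ‖q‖ ^ (j ^ 2) * ‖qPoch q N‖) /
          ((‖qPoch q j‖ * ‖qPoch q (N - j)‖) *
            ‖∏ m ∈ Finset.range j, (1 - z * q ^ (m + 1))‖) := by
        simp only [hF_def, qb]
        rw [if_pos hj, if_pos hj, norm_div, norm_mul, norm_div, norm_mul, norm_mul,
          norm_pow, norm_pow]
        ring
      rw [e]
      have hnum : ‖z‖ ^ j * ‖q‖ ^ (j ^ 2) * ‖qPoch q N‖ ≤ ‖z*q‖ ^ j * Mq := by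
        have h1 : ‖z‖ ^ j * ‖q‖ ^ (j ^ 2) ≤ ‖z*q‖ ^ j := by
          rw [norm_mul, mul_pow]
          exact mul_le_mul_of_nonneg_left
            (pow_le_pow_of_le_one (norm_nonneg q) hq.le (Nat.le_self_pow two_ne_zero j))
            (by positivity)
        exact mul_le_mul h1 (hq_up N) (norm_nonneg _) (by positivity)
      have hden : (cq * cq) * czq ≤ (‖qPoch q j‖ * ‖qPoch q (N - j)‖) *
          ‖∏ m ∈ Finset.range j, (1 - z * q ^ (m + 1))‖ :=
        mul_le_mul (mul_le_mul (hq_low j) (hq_low (N - j)) hcq_pos.le (norm_nonneg _))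
          (hz_low j) hczq_pos.le (by positivity)
      calc (‖z‖ ^ j * ‖q‖ ^ (j ^ 2) * ‖qPoch q N‖) /
            ((‖qPoch q j‖ * ‖qPoch q (N - j)‖) *
              ‖∏ m ∈ Finset.range j, (1 - z * q ^ (m + 1))‖)
          ≤ (‖z*q‖ ^ j * Mq) / ((cq * cq) * czq) :=
            div_le_div₀ (by positivity) hnum (by positivity) hden
        _ = (Mq / (cq * cq * czq)) * ‖z*q‖ ^ j := by ring
    · simp only [hF_def]
      rw [if_neg hj, norm_zero]
      positivity
  have hboundsum : Summable (fun j : ℕ => (Mq / (cq * cq * czq)) * ‖z*q‖ ^ j) :=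
    (summable_geometric_of_lt_one (norm_nonneg _) hzq).mul_left _
  have htan : Filter.Tendsto (fun N => ∑' j, F N j) Filter.atTop (𝓝 (∑' j, G j)) :=
    tendsto_tsum_of_dominated_convergence hboundsum hlimF
      (Filter.Eventually.of_forall fun N j => hFbound N j)
  have hPinv : Filter.Tendsto (fun N => (∏ m ∈ Finset.range N, (1 - z * q ^ (m+1)))⁻¹)
      Filter.atTop (𝓝 (∑' j, G j)) := htan.congr fun N => htsumF N
  have hSnorm : Mzq⁻¹ ≤ ‖∑' j, G j‖ := by
    apply ge_of_tendsto hPinv.norm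
    refine Filter.Eventually.of_forall fun N => ?_
    rw [norm_inv]
    exact inv_anti₀ (norm_pos_iff.2 (hzprod_ne N)) (hz_up N)
  have hS_ne : (∑' j, G j) ≠ 0 := fun h0 => by
    rw [h0, norm_zero] at hSnorm
    have := inv_pos.2 hMzq_pos
    linarith
  have hmulz : Multipliable (fun m : ℕ => 1 - z * q ^ (m + 1)) := by
    have hfe : (fun m : ℕ => 1 - z * q ^ (m + 1)) = fun m : ℕ => 1 - (z*q) * q ^ m :=
      funext fun m => by rw [pow_succ']; ring
    rw [hfe]
    exact Complex.multipliable_of_summable_log (summable_log_one_sub hq hzq)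
  have htz : Filter.Tendsto (fun N => ∏ m ∈ Finset.range N, (1 - z * q ^ (m+1)))
      Filter.atTop (𝓝 (∏' m : ℕ, (1 - z * q ^ (m + 1)))) :=
    hmulz.hasProd.tendsto_prod_nat
  have htz2 : Filter.Tendsto (fun N => ∏ m ∈ Finset.range N, (1 - z * q ^ (m+1)))
      Filter.atTop (𝓝 (∑' j, G j)⁻¹) := by
    have h := hPinv.inv₀ hS_ne
    exact h.congr fun N => inv_inv _
  have hPeq : (∏' m : ℕ, (1 - z * q ^ (m + 1))) = (∑' j, G j)⁻¹ :=
    tendsto_nhds_unique htz htz2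
  rw [hPeq, inv_inv]
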